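/- Let ι be a finite index type with decidable equality, let γ : ι → Type be a family of finite types with decidable equality, let n > 0, let d : Fin n → (Π i, γ i) be a data sample, and let y : Fin n → β for a finite type β with decidable equality. For a subset S ⊆ ι write x_S : Fin n → (Π i ∈ S, γ i) for the restriction of the sample to the attributes in S. Then for all subsets S ⊆ S' ⊆ ι, the permutation-model correction term is monotonically increasing with respect to the subset relation: m̂₀(x_S, y) ≤ m̂₀(x_{S'}, y). -/

import Mathlib

open Finset

/-- Empirical mutual information between `x : Fin n → α` and `y : Fin n → β`,
`Î(x,y) = Σ_{v,w} (c(v,w)/n)·log(c(v,w)·n/(a(v)·b(w)))`, terms with `c(v,w)=0` being `0`. -/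
noncomputable def empMI {n : ℕ} {α β : Type*} [Fintype α] [DecidableEq α]
    [Fintype β] [DecidableEq β] (x : Fin n → α) (y : Fin n → β) : ℝ :=
  ∑ v : α, ∑ w : β,
    (((univ.filter fun t => x t = v ∧ y t = w).card : ℝ) / n) *
      Real.log ((((univ.filter fun t => x t = v ∧ y t = w).card : ℝ) * n) /
        (((univ.filter fun t => x t = v).card : ℝ) *
          ((univ.filter fun t => y t = w).card : ℝ)))

/-- Permutation-model expectation of the empirical mutual information:
`m̂₀(x,y) = (1/n!)·Σ_{σ ∈ Perm(Fin n)} Î(x, y∘σ)`. -/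
noncomputable def permExpMI {n : ℕ} {α β : Type*} [Fintype α] [DecidableEq α]
    [Fintype β] [DecidableEq β] (x : Fin n → α) (y : Fin n → β) : ℝ :=
  (1 / (n.factorial : ℝ)) * ∑ σ : Equiv.Perm (Fin n), empMI x (y ∘ σ)

/-- Restriction `x_S` of the sample `d` to the attributes in `S`. -/
def restrictSample {ι : Type*} {γ : ι → Type*} {n : ℕ} (d : Fin n → ∀ i, γ i)
    (S : Finset ι) : Fin n → (∀ i : S, γ i) := fun t i => d t i

/-- The log-sum inequality: `(Σa)·log(Σa/Σb) ≤ Σ aᵢ·log(aᵢ/bᵢ)`. -/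
lemma logSumIneq {ι : Type*} (s : Finset ι) (a b : ι → ℝ)
    (ha : ∀ i ∈ s, 0 ≤ a i) (hb : ∀ i ∈ s, 0 ≤ b i)
    (hab : ∀ i ∈ s, b i = 0 → a i = 0) :
    (∑ i ∈ s, a i) * Real.log ((∑ i ∈ s, a i) / (∑ i ∈ s, b i)) ≤
      ∑ i ∈ s, a i * Real.log (a i / b i) := by
  set B := ∑ i ∈ s, b i with hB
  rcases eq_or_lt_of_le (Finset.sum_nonneg hb) with h0 | hBpos
  · have hb0 : ∀ i ∈ s, b i = 0 := fun i hi =>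
      (Finset.sum_eq_zero_iff_of_nonneg hb).mp h0.symm i hi
    have ha0 : ∀ i ∈ s, a i = 0 := fun i hi => hab i hi (hb0 i hi)
    rw [Finset.sum_eq_zero ha0, Finset.sum_eq_zero (fun i hi => by rw [ha0 i hi]; ring)]
    simp
  · have hBne : B ≠ 0 := hBpos.ne'
    have key := Real.convexOn_mul_log.map_sum_le (t := s) (w := fun i => b i / B)
      (p := fun i => a i / b i)
      (fun i hi => div_nonneg (hb i hi) hBpos.le)
      (by rw [← Finset.sum_div, div_self hBne])
      (fun i hi => Set.mem_Ici.mpr (div_nonneg (ha i hi) (hb i hi)))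
    have h1 : ∑ i ∈ s, (b i / B) • (a i / b i) = (∑ i ∈ s, a i) / B := by
      rw [Finset.sum_div]
      refine Finset.sum_congr rfl fun i hi => ?_
      rcases eq_or_ne (b i) 0 with h | h
      · rw [smul_eq_mul, h, hab i hi h]; simp
      · rw [smul_eq_mul]; field_simp
    have h2 : ∑ i ∈ s, (b i / B) • ((a i / b i) * Real.log (a i / b i)) =
        (∑ i ∈ s, a i * Real.log (a i / b i)) / B := by
      rw [Finset.sum_div]
      refine Finset.sum_congr rfl fun i hi => ?_
      rcases eq_or_ne (b i) 0 with h | h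
      · rw [smul_eq_mul, h, hab i hi h]; simp
      · rw [smul_eq_mul]; field_simp
    simp only [smul_eq_mul] at key h1 h2
    rw [h1, h2] at key
    have := mul_le_mul_of_nonneg_left key hBpos.le
    calc (∑ i ∈ s, a i) * Real.log ((∑ i ∈ s, a i) / B)
        = B * ((∑ i ∈ s, a i) / B * Real.log ((∑ i ∈ s, a i) / B)) := by
          field_simp
      _ ≤ B * ((∑ i ∈ s, a i * Real.log (a i / b i)) / B) := this
      _ = ∑ i ∈ s, a i * Real.log (a i / b i) := by field_simp

/-- Data-processing: coarsening the first argument decreases empirical MI. -/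
lemma empMI_comp_le {n : ℕ} (hn : 0 < n) {α α' β : Type*}
    [Fintype α] [DecidableEq α] [Fintype α'] [DecidableEq α']
    [Fintype β] [DecidableEq β] (f : α' → α) (x : Fin n → α') (y : Fin n → β) :
    empMI (f ∘ x) y ≤ empMI x y := by
  have hnR : (0 : ℝ) < n := by exact_mod_cast hn
  unfold empMI
  rw [← Finset.sum_fiberwise (univ : Finset α') f]
  refine Finset.sum_le_sum fun v _ => ?_
  rw [Finset.sum_comm]
  refine Finset.sum_le_sum fun w _ => ?_
  -- notation
  set C : α' → ℕ := fun u => (univ.filter fun t => x t = u ∧ y t = w).card with hCdef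
  set A : α' → ℕ := fun u => (univ.filter fun t => x t = u).card with hAdef
  set Bw : ℕ := (univ.filter fun t => y t = w).card with hBdef
  have hCA : ∀ u, C u ≤ A u := fun u =>
    Finset.card_le_card (by
      intro t ht
      simp only [Finset.mem_filter] at ht ⊢
      exact ⟨ht.1, ht.2.1⟩)
  have hCB : ∀ u, C u ≤ Bw := fun u =>
    Finset.card_le_card (by
      intro t ht
      simp only [Finset.mem_filter] at ht ⊢
      exact ⟨ht.1, ht.2.2⟩)
  -- the grouped counts
  have hC' : ((univ.filter fun t => (f ∘ x) t = v ∧ y t = w).card : ℝ) =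
      ∑ u ∈ univ.filter (fun u => f u = v), (C u : ℝ) := by
    rw [← Nat.cast_sum]
    congr 1
    rw [Finset.card_eq_sum_card_fiberwise
      (f := x) (t := univ.filter (fun u => f u = v))
      (fun t ht => by
        simp only [Finset.mem_filter, Function.comp_apply] at ht ⊢
        exact Finset.mem_filter.mpr ⟨Finset.mem_univ _, (Finset.mem_filter.mp ht).2.1⟩)]
    refine Finset.sum_congr rfl fun u hu => ?_
    simp only [Finset.mem_filter] at hu
    congr 1
    ext t
    simp only [Finset.mem_filter, Function.comp_apply, Finset.mem_univ, true_and]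
    constructor
    · rintro ⟨⟨_, h2⟩, h3⟩; exact ⟨h3, h2⟩
    · rintro ⟨h1, h2⟩; exact ⟨⟨by rw [h1]; exact hu.2, h2⟩, h1⟩
  have hA' : ((univ.filter fun t => (f ∘ x) t = v).card : ℝ) =
      ∑ u ∈ univ.filter (fun u => f u = v), (A u : ℝ) := by
    rw [← Nat.cast_sum]
    congr 1
    rw [Finset.card_eq_sum_card_fiberwise
      (f := x) (t := univ.filter (fun u => f u = v))
      (fun t ht => by
        simp only [Finset.mem_filter, Function.comp_apply] at ht ⊢
        exact Finset.mem_filter.mpr ⟨Finset.mem_univ _, (Finset.mem_filter.mp ht).2⟩)]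
    refine Finset.sum_congr rfl fun u hu => ?_
    simp only [Finset.mem_filter] at hu
    congr 1
    ext t
    simp only [Finset.mem_filter, Function.comp_apply, Finset.mem_univ, true_and]
    constructor
    · rintro ⟨_, h3⟩; exact h3
    · rintro h1; exact ⟨by rw [h1]; exact hu.2, h1⟩
  -- apply the log-sum inequality with a u = C u, b u = A u * Bw / n
  have key := logSumIneq (univ.filter (fun u => f u = v))
    (fun u => (C u : ℝ)) (fun u => (A u : ℝ) * (Bw : ℝ) / n)
    (fun u _ => by positivity) (fun u _ => by positivity)
    (fun u _ h => by
      show ((C u : ℕ) : ℝ) = 0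
      have h' : (A u : ℝ) * (Bw : ℝ) / (n : ℝ) = 0 := h
      have hABz : (A u : ℝ) * (Bw : ℝ) = 0 := by
        rcases div_eq_zero_iff.mp h' with h'' | h''
        · exact h''
        · exact absurd h'' (by positivity)
      have hCz : C u = 0 := by
        rcases mul_eq_zero.mp hABz with h'' | h''
        · have hA0 : A u = 0 := by exact_mod_cast h''
          exact Nat.le_zero.mp (hA0 ▸ hCA u)
        · have hB0 : Bw = 0 := by exact_mod_cast h''
          exact Nat.le_zero.mp (hB0 ▸ hCB u)
      exact_mod_cast hCz)
  have hsumb : (∑ u ∈ univ.filter (fun u => f u = v), (A u : ℝ) * (Bw : ℝ) / n) =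
      ((univ.filter fun t => (f ∘ x) t = v).card : ℝ) * (Bw : ℝ) / n := by
    rw [hA', Finset.sum_mul, Finset.sum_div]
  rw [hsumb, ← hC'] at key
  -- massage both sides to match the goal
  have hlog1 : ∀ (c ab : ℝ), c / (ab / n) = c * n / ab := fun c ab => div_div_eq_mul_div c ab n
  calc ((univ.filter fun t => (f ∘ x) t = v ∧ y t = w).card : ℝ) / n *
        Real.log (((univ.filter fun t => (f ∘ x) t = v ∧ y t = w).card : ℝ) * n /
          (((univ.filter fun t => (f ∘ x) t = v).card : ℝ) * (Bw : ℝ)))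
      = (((univ.filter fun t => (f ∘ x) t = v ∧ y t = w).card : ℝ) *
          Real.log (((univ.filter fun t => (f ∘ x) t = v ∧ y t = w).card : ℝ) /
            (((univ.filter fun t => (f ∘ x) t = v).card : ℝ) * (Bw : ℝ) / n))) / n := by
        rw [hlog1]; ring
    _ ≤ (∑ u ∈ univ.filter (fun u => f u = v),
          (C u : ℝ) * Real.log ((C u : ℝ) / ((A u : ℝ) * (Bw : ℝ) / n))) / n := by
        apply div_le_div_of_nonneg_right key hnR.le |>.trans_eq rfl
    _ = ∑ u ∈ univ.filter (fun u => f u = v),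
          (C u : ℝ) / n * Real.log ((C u : ℝ) * n / ((A u : ℝ) * (Bw : ℝ))) := by
        rw [Finset.sum_div]
        refine Finset.sum_congr rfl fun u _ => ?_
        rw [hlog1]; ring

/-- The permutation-model correction term is monotonically increasing with respect to
the subset relation on attribute sets: for `S ⊆ S'`, `m̂₀(x_S, y) ≤ m̂₀(x_{S'}, y)`. -/
theorem permExpMI_mono_subset {ι : Type*} [Fintype ι] [DecidableEq ι]
    {γ : ι → Type*} [∀ i, Fintype (γ i)] [∀ i, DecidableEq (γ i)]
    {n : ℕ} (hn : 0 < n) (d : Fin n → ∀ i, γ i)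
    {β : Type*} [Fintype β] [DecidableEq β] (y : Fin n → β)
    (S S' : Finset ι) (hSS' : S ⊆ S') :
    permExpMI (restrictSample d S) y ≤ permExpMI (restrictSample d S') y := by
  have hx : restrictSample d S =
      (fun (g : ∀ i : S', γ i) (i : S) => g ⟨i.1, hSS' i.2⟩) ∘ restrictSample d S' := rfl
  rw [hx, permExpMI, permExpMI]
  refine mul_le_mul_of_nonneg_left ?_ (by positivity)
  exact Finset.sum_le_sum fun σ _ => empMI_comp_le hn _ _ _
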